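/- Let u : [0,∞) → [0,∞) be bounded and monotone decreasing, and suppose there exists s > 0 such that for all t > 0, s · ∫_t^∞ u(τ) dτ ≤ u(t). Then for all t > 0, u(t) ≤ (e^s/s) · u(0) · e^{-s t}. -/

import Mathlib

open MeasureTheory

theorem weak_gronwall (u : ℝ → ℝ) (s : ℝ) (hs : 0 < s)
    (hpos : ∀ t, 0 ≤ t → 0 ≤ u t)
    (hbdd : ∃ C, ∀ t, 0 ≤ t → u t ≤ C)
    (hmono : ∀ t₁ t₂, 0 ≤ t₁ → t₁ ≤ t₂ → u t₂ ≤ u t₁)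
    (hint : ∀ t, 0 ≤ t → IntegrableOn u (Set.Ioi t))
    (hineq : ∀ t, 0 < t → s * ∫ τ in Set.Ioi t, u τ ≤ u t) :
    ∀ t, 0 < t → u t ≤ (Real.exp s / s) * u 0 * Real.exp (-s * t) := by
  set F : ℝ → ℝ := fun t => ∫ τ in Set.Ioi t, u τ with hF
  -- F is nonnegative on [0, ∞)
  have hFpos : ∀ t, 0 ≤ t → 0 ≤ F t := by
    intro t ht
    apply setIntegral_nonneg measurableSet_Ioi
    intro x hx
    exact hpos x (le_trans ht (le_of_lt hx))
  -- decomposition: F a = ∫_{Ioc a b} u + F b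
  have hdecomp : ∀ a b, 0 ≤ a → a ≤ b → F a = (∫ τ in Set.Ioc a b, u τ) + F b := by
    intro a b ha hab
    have h1 : Set.Ioc a b ∪ Set.Ioi b = Set.Ioi a := Set.Ioc_union_Ioi_eq_Ioi hab
    have h2 : Disjoint (Set.Ioc a b) (Set.Ioi b) := by
      apply Set.disjoint_left.2
      intro x hx hx'
      exact absurd hx.2 (not_le.2 hx')
    have hia : IntegrableOn u (Set.Ioc a b) :=
      (hint a ha).mono_set (fun x hx => hx.1)
    have hib : IntegrableOn u (Set.Ioi b) := hint b (le_trans ha hab)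
    have := setIntegral_union h2 measurableSet_Ioi hia hib (f := u) (μ := volume)
    rw [hF]
    simp only []
    rw [← h1, this]
  -- lower bound: (b - a) * u b ≤ ∫_{Ioc a b} u
  have hlow : ∀ a b, 0 ≤ a → a ≤ b → (b - a) * u b ≤ ∫ τ in Set.Ioc a b, u τ := by
    intro a b ha hab
    have hμ : (volume (Set.Ioc a b)) ≠ ⊤ := by
      rw [Real.volume_Ioc]; exact ENNReal.ofReal_ne_top
    have h := setIntegral_ge_of_const_le_real (μ := volume) (c := u b) measurableSet_Ioc hμ
      (fun x hx => hmono x b (le_trans ha (le_of_lt hx.1)) hx.2)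
      ((hint a ha).mono_set (fun x hx => hx.1))
    rw [measureReal_def, Real.volume_Ioc, ENNReal.toReal_ofReal (by linarith)] at h
    linarith [h]
  -- step: (1 + s*h) * F b ≤ F a for b = a + h, b > 0
  have hstep : ∀ a h, 0 ≤ a → 0 ≤ h → 0 < a + h → (1 + s * h) * F (a + h) ≤ F a := by
    intro a h ha hh hb
    have h1 := hdecomp a (a + h) ha (by linarith)
    have h2 := hlow a (a + h) ha (by linarith)
    have h3 := hineq (a + h) hb
    have h4 : h * (s * F (a + h)) ≤ h * u (a + h) :=
      mul_le_mul_of_nonneg_left h3 hh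
    have h5 : (a + h - a) = h := by ring
    rw [h5] at h2
    nlinarith [hFpos (a + h) (by linarith)]
  -- iterate: F (k*h) * (1 + s*h)^k ≤ F 0
  have hiter : ∀ h : ℝ, 0 < h → ∀ k : ℕ, F ((k : ℝ) * h) * (1 + s * h) ^ k ≤ F 0 := by
    intro h hh k
    induction k with
    | zero => simp
    | succ k ih =>
      have hk : (0:ℝ) ≤ (k : ℝ) * h := by positivity
      have hstep' := hstep ((k:ℝ) * h) h hk (le_of_lt hh) (by positivity)
      have hcast : ((k + 1 : ℕ) : ℝ) * h = (k : ℝ) * h + h := by push_cast; ring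
      rw [hcast]
      have hpow : (0:ℝ) ≤ (1 + s * h) ^ k := by positivity
      calc F ((k:ℝ) * h + h) * (1 + s * h) ^ (k + 1)
          = ((1 + s * h) * F ((k:ℝ) * h + h)) * (1 + s * h) ^ k := by ring
        _ ≤ F ((k:ℝ) * h) * (1 + s * h) ^ k := by
            apply mul_le_mul_of_nonneg_right hstep' hpow
        _ ≤ F 0 := ih
  -- exponential decay of F
  have hFdecay : ∀ T, 0 ≤ T → F T ≤ F 0 * Real.exp (-s * T) := by
    intro T hT
    rcases eq_or_lt_of_le hT with h0 | h0
    · rw [← h0]; simp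
    have key : F T * Real.exp (s * T) ≤ F 0 := by
      have htend : Filter.Tendsto (fun n : ℕ => F T * (1 + (s * T) / (n : ℝ)) ^ n)
          Filter.atTop (nhds (F T * Real.exp (s * T))) :=
        (Real.tendsto_one_add_div_pow_exp (s * T)).const_mul (F T)
      apply le_of_tendsto htend
      filter_upwards [Filter.eventually_gt_atTop 0] with n hn
      have hn' : (0:ℝ) < (n : ℝ) := by exact_mod_cast hn
      have hh : 0 < T / (n : ℝ) := div_pos h0 hn'
      have := hiter (T / (n:ℝ)) hh n
      have heq : (n : ℝ) * (T / (n:ℝ)) = T := by field_simp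
      rw [heq] at this
      have heq2 : s * (T / (n:ℝ)) = (s * T) / (n : ℝ) := by ring
      rw [heq2] at this
      linarith
    have hE : 0 < Real.exp (s * T) := Real.exp_pos _
    have hEE : Real.exp (-s * T) * Real.exp (s * T) = 1 := by
      rw [← Real.exp_add]; ring_nf; exact Real.exp_zero
    have hEE' : Real.exp (s * T) * Real.exp (-s * T) = 1 := by
      rw [mul_comm]; exact hEE
    calc F T = F T * (Real.exp (s * T) * Real.exp (-s * T)) := by rw [hEE', mul_one]
      _ = (F T * Real.exp (s * T)) * Real.exp (-s * T) := by ring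
      _ ≤ F 0 * Real.exp (-s * T) :=
          mul_le_mul_of_nonneg_right key (Real.exp_pos _).le
  -- F 0 ≤ u 0 / s
  have hF0 : F 0 ≤ u 0 / s := by
    have key : ∀ ε : ℝ, 0 < ε → F 0 ≤ u 0 / s + ε * u 0 := by
      intro ε hε
      have h1 := hdecomp 0 ε le_rfl (le_of_lt hε)
      have h2 : (∫ τ in Set.Ioc 0 ε, u τ) ≤ ε * u 0 := by
        have hμ : (volume (Set.Ioc (0:ℝ) ε)) ≠ ⊤ := by
          rw [Real.volume_Ioc]; exact ENNReal.ofReal_ne_top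
        have h := setIntegral_mono_on (μ := volume)
          ((hint 0 le_rfl).mono_set (fun x hx => hx.1))
          (integrableOn_const hμ)
          measurableSet_Ioc (fun x hx => hmono 0 x le_rfl (le_of_lt hx.1))
        rw [setIntegral_const, measureReal_def, Real.volume_Ioc, ENNReal.toReal_ofReal (by linarith),
          smul_eq_mul] at h
        simpa using h
      have h3 := hineq ε hε
      have h4 : F ε ≤ u ε / s := by
        rw [le_div_iff₀ hs]; linarith
      have h5 : u ε ≤ u 0 := hmono 0 ε le_rfl (le_of_lt hε)
      have h6 : u ε / s ≤ u 0 / s := by gcongr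
      linarith
    -- conclude via epsilon argument
    by_contra hcon
    push_neg at hcon
    have hu0 : 0 ≤ u 0 := hpos 0 le_rfl
    set δ := F 0 - u 0 / s with hδ
    have hδpos : 0 < δ := by simp [hδ]; linarith
    have := key (δ / (2 * (u 0 + 1))) (by positivity)
    have hfr : (δ / (2 * (u 0 + 1))) * u 0 < δ := by
      rw [div_mul_eq_mul_div, div_lt_iff₀ (by positivity)]
      nlinarith
    simp only [hδ] at hfr
    linarith
  -- now the conclusion
  intro t ht
  have hu0 : 0 ≤ u 0 := hpos 0 le_rfl
  have hes : s ≤ Real.exp (s - 1) := by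
    nlinarith [Real.add_one_le_exp (s - 1)]
  rcases le_or_gt t (1 / s) with hcase | hcase
  · -- small t : u t ≤ u 0 ≤ RHS
    have h1 : u t ≤ u 0 := hmono 0 t le_rfl (le_of_lt ht)
    have h2 : Real.exp (s - 1) ≤ Real.exp (s + -s * t) := by
      apply Real.exp_le_exp.2
      have : s * t ≤ s * (1 / s) := mul_le_mul_of_nonneg_left hcase (le_of_lt hs)
      rw [mul_one_div, div_self (ne_of_gt hs)] at this
      linarith
    have h3 : s ≤ Real.exp (s + -s * t) := le_trans hes h2
    have key : u 0 * s ≤ u 0 * Real.exp (s + -s * t) :=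
      mul_le_mul_of_nonneg_left h3 hu0
    rw [Real.exp_add] at key
    calc u t ≤ u 0 := h1
      _ ≤ (Real.exp s / s) * u 0 * Real.exp (-s * t) := by
          rw [div_mul_eq_mul_div, div_mul_eq_mul_div, le_div_iff₀ hs]
          nlinarith
  · -- large t : use u t / s ≤ F (t - 1/s)
    set a := t - 1 / s with ha
    have hsinv : 0 < 1 / s := one_div_pos.mpr hs
    have ha0 : 0 < a := by simp only [ha]; linarith
    have h1 := hdecomp a t (le_of_lt ha0) (by simp only [ha]; linarith)
    have h2 := hlow a t (le_of_lt ha0) (by simp only [ha]; linarith)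
    have h3 : t - a = 1 / s := by simp only [ha]; ring
    rw [h3] at h2
    have h4 : F t ≥ 0 := hFpos t (le_of_lt ht)
    have h5 : (1 / s) * u t ≤ F a := by linarith
    have h6 := hFdecay a (le_of_lt ha0)
    have h7 : F a ≤ (u 0 / s) * Real.exp (-s * a) := by
      calc F a ≤ F 0 * Real.exp (-s * a) := h6
        _ ≤ (u 0 / s) * Real.exp (-s * a) :=
            mul_le_mul_of_nonneg_right hF0 (le_of_lt (Real.exp_pos _))
    have h8 : -s * a = 1 + -s * t := by
      have hss : s * (1 / s) = 1 := by field_simp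
      rw [ha]; linear_combination hss
    rw [h8, Real.exp_add] at h7
    have h9 : u t ≤ s * ((u 0 / s) * (Real.exp 1 * Real.exp (-s * t))) := by
      have := le_trans h5 h7
      calc u t = s * ((1/s) * u t) := by field_simp
        _ ≤ s * ((u 0 / s) * (Real.exp 1 * Real.exp (-s * t))) :=
            mul_le_mul_of_nonneg_left this (le_of_lt hs)
    have h10 : s * ((u 0 / s) * (Real.exp 1 * Real.exp (-s * t))) =
        (Real.exp 1 * u 0) * Real.exp (-s * t) := by
      field_simp
    rw [h10] at h9
    have h11 : Real.exp 1 ≤ Real.exp s / s := by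
      rw [le_div_iff₀ hs]
      calc Real.exp 1 * s ≤ Real.exp 1 * Real.exp (s - 1) :=
            mul_le_mul_of_nonneg_left hes (le_of_lt (Real.exp_pos _))
        _ = Real.exp (1 + (s - 1)) := (Real.exp_add _ _).symm
        _ = Real.exp s := by ring_nf
    calc u t ≤ (Real.exp 1 * u 0) * Real.exp (-s * t) := h9
      _ ≤ (Real.exp s / s) * u 0 * Real.exp (-s * t) := by
          apply mul_le_mul_of_nonneg_right _ (le_of_lt (Real.exp_pos _))
          exact mul_le_mul_of_nonneg_right h11 hu0
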